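/- Define f : ℝ → ℝ by f(x) = x + (1 − cos x)/10. Then for every x with 0 < x < 2π, the sequence of iterates f^[n](x) converges to 2π as n → ∞. (This expresses the Lyapunov instability of the fixed point 0 for the induced circle map: points arbitrarily close to 0 on one side travel all the way to 2π.) -/

import Mathlib

open Function Filter Topology

/-- For `f x = x + (1 - cos x)/10`, every orbit starting in `(0, 2π)` converges to `2π`:
Lyapunov instability of the semistable fixed point `0` of the induced circle map. -/
theorem stmt9 (f : ℝ → ℝ) (hf : ∀ x, f x = x + (1 - Real.cos x) / 10) :
    ∀ x : ℝ, 0 < x → x < 2 * Real.pi →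
      Tendsto (fun n => f^[n] x) atTop (nhds (2 * Real.pi)) := by
  have pi_pos := Real.pi_pos
  have hstep : ∀ y, y ≤ f y := by
    intro y; rw [hf]; nlinarith [Real.cos_le_one y]
  have hsm : StrictMono f := by
    intro u v huv
    have hcos : |Real.cos v - Real.cos u| ≤ |v - u| := by
      rw [Real.cos_sub_cos]
      have h1 : |Real.sin ((v + u) / 2)| ≤ 1 :=
        abs_le.mpr ⟨Real.neg_one_le_sin _, Real.sin_le_one _⟩
      have h2 : |Real.sin ((v - u) / 2)| ≤ |(v - u) / 2| := Real.abs_sin_le_abs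
      have h3 : |(v - u) / 2| = |v - u| / 2 := by rw [abs_div]; norm_num
      calc |(-2) * Real.sin ((v + u) / 2) * Real.sin ((v - u) / 2)|
          = 2 * |Real.sin ((v + u) / 2)| * |Real.sin ((v - u) / 2)| := by
            rw [abs_mul, abs_mul]; norm_num
        _ ≤ 2 * 1 * (|v - u| / 2) := by
            apply mul_le_mul _ (h2.trans h3.le) (abs_nonneg _) (by norm_num)
            nlinarith [abs_nonneg (Real.sin ((v + u) / 2))]
        _ = |v - u| := by ring
    have h1 : Real.cos v - Real.cos u ≤ v - u := le_trans (le_abs_self _)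
      (hcos.trans (le_of_eq (abs_of_pos (by linarith))))
    rw [hf, hf]; linarith
  have hfix : f (2 * Real.pi) = 2 * Real.pi := by
    rw [hf, Real.cos_two_pi]; ring
  have hcont : Continuous f := by
    have : f = fun x => x + (1 - Real.cos x) / 10 := funext hf
    rw [this]; continuity
  intro x hx0 hx2
  set a : ℕ → ℝ := fun n => f^[n] x with ha
  have hlt : ∀ n, a n < 2 * Real.pi := by
    intro n; induction n with
    | zero => exact hx2
    | succ n ih =>
      have : a (n+1) = f (a n) := Function.iterate_succ_apply' f n x
      rw [this]
      calc f (a n) < f (2 * Real.pi) := hsm ih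
        _ = 2 * Real.pi := hfix
  have hmono : Monotone a := by
    apply monotone_nat_of_le_succ
    intro n
    have h : a (n+1) = f (a n) := Function.iterate_succ_apply' f n x
    rw [h]; exact hstep _
  have hbdd : BddAbove (Set.range a) := ⟨2 * Real.pi, by rintro y ⟨n, rfl⟩; exact (hlt n).le⟩
  obtain ⟨L, hL⟩ := (tendsto_of_monotone hmono).resolve_left (by
    intro h
    obtain ⟨n, hn⟩ := (h.eventually_gt_atTop (2 * Real.pi)).exists
    exact absurd hn (not_lt.mpr (hlt n).le))
  have hL2 : L ≤ 2 * Real.pi := le_of_tendsto hL (Eventually.of_forall fun n => (hlt n).le)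
  have hL0 : 0 < L := lt_of_lt_of_le hx0 (ge_of_tendsto hL
    (Eventually.of_forall fun n => hmono (Nat.zero_le n)))
  have hfL : f L = L := by
    have h1 : Tendsto (fun n => a (n+1)) atTop (nhds L) := hL.comp (tendsto_add_atTop_nat 1)
    have h2 : Tendsto (fun n => f (a n)) atTop (nhds (f L)) := (hcont.tendsto L).comp hL
    have he : (fun n => a (n+1)) = fun n => f (a n) := by
      funext n; exact Function.iterate_succ_apply' f n x
    rw [he] at h1
    exact tendsto_nhds_unique h2 h1
  have hcosL : Real.cos L = 1 := by
    rw [hf] at hfL; linarith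
  obtain ⟨k, hk⟩ := Real.cos_eq_one_iff L |>.mp hcosL
  have hL2pi : L = 2 * Real.pi := by
    have hk1 : (k : ℝ) ≥ 1 := by
      by_contra h
      push_neg at h
      have : (k : ℝ) ≤ 0 := by
        have : k < 1 := by exact_mod_cast h
        exact_mod_cast Int.lt_add_one_iff.mp (by linarith [this])
      nlinarith
    nlinarith
  rw [← hL2pi]; exact hL
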